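/- Let p be a prime and d_1,...,d_k integers that are pairwise distinct modulo p. Let J ⊆ {1,...,k} with j = card J, and set q_i = p for i ∈ J and q_i = 1 for i ∉ J. Then A(q_1,...,q_k) = (-1)^{j-1}(j-1), where A(q_1,...,q_k) = ∑ e(∑_{i=1}^k d_i a_i/q_i) with the sum over tuples (a_1,...,a_k), 1 ≤ a_i ≤ q_i, gcd(a_i,q_i)=1, ∑ a_i/q_i ∈ ℤ. -/

import Mathlib

open Finset

/-- The Hardy–Littlewood exponential sum `A(q₁,…,q_k)` attached to the tuple `d`. -/
noncomputable def HLA (k : ℕ) (d : Fin k → ℤ) (q : Fin k → ℕ) : ℂ :=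
  ∑ a ∈ (Fintype.piFinset fun i => Finset.Icc 1 (q i)).filter
      (fun a => (∀ i, Nat.gcd (a i) (q i) = 1) ∧ (∑ i, (a i : ℚ) / (q i : ℚ)).den = 1),
    Complex.exp (2 * Real.pi * Complex.I * ∑ i, (d i : ℂ) * (a i : ℂ) / (q i : ℂ))

noncomputable def HLee (p : ℕ) (c : ℤ) : ℂ := Complex.exp (2 * Real.pi * Complex.I * c / p)

lemma HLee_eq_pow (p : ℕ) (c : ℤ) : HLee p c = Complex.exp (2 * Real.pi * Complex.I / p) ^ c := by
  rw [← Complex.exp_int_mul]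
  unfold HLee
  ring_nf

lemma HLee_add (p : ℕ) (m n : ℤ) : HLee p (m + n) = HLee p m * HLee p n := by
  unfold HLee
  rw [← Complex.exp_add]
  push_cast
  ring_nf

lemma HLee_zero (p : ℕ) : HLee p 0 = 1 := by simp [HLee]

lemma HLee_sum {ι : Type*} (p : ℕ) (s : Finset ι) (f : ι → ℤ) :
    HLee p (∑ i ∈ s, f i) = ∏ i ∈ s, HLee p (f i) := by
  classical
  induction s using Finset.cons_induction with
  | empty => simp [HLee_zero]
  | cons a s ha ih => rw [Finset.sum_cons, Finset.prod_cons, HLee_add, ih]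

lemma HLee_geom (p : ℕ) (hp : 0 < p) (c : ℤ) :
    ∑ x ∈ Finset.range p, HLee p (c * x) = if (p : ℤ) ∣ c then (p : ℂ) else 0 := by
  have hprim : IsPrimitiveRoot (Complex.exp (2 * Real.pi * Complex.I / p)) p :=
    Complex.isPrimitiveRoot_exp p hp.ne'
  set E : ℂ := Complex.exp (2 * Real.pi * Complex.I / p) with hE
  have hterm : ∀ x : ℕ, HLee p (c * x) = (E ^ c) ^ x := by
    intro x
    rw [HLee_eq_pow, ← hE, ← zpow_natCast (E ^ c) x, ← zpow_mul]
  simp_rw [hterm]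
  by_cases hdvd : (p : ℤ) ∣ c
  · rw [if_pos hdvd, (hprim.zpow_eq_one_iff_dvd c).2 hdvd]
    simp
  · rw [if_neg hdvd]
    have hne : E ^ c ≠ 1 := fun h => hdvd ((hprim.zpow_eq_one_iff_dvd c).1 h)
    rw [geom_sum_eq hne]
    have : (E ^ c) ^ p = 1 := by
      rw [← zpow_natCast (E ^ c) p, ← zpow_mul, mul_comm, zpow_mul, zpow_natCast,
        hprim.pow_eq_one, one_zpow]
    rw [this, sub_self, zero_div]

lemma HLee_geom' (p : ℕ) (hp : 0 < p) (c : ℤ) :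
    ∑ x ∈ Finset.Ico 1 p, HLee p (c * x) = (if (p : ℤ) ∣ c then (p : ℂ) else 0) - 1 := by
  have h : Finset.range p = insert 0 (Finset.Ico 1 p) := by
    ext x; simp only [Finset.mem_range, Finset.mem_insert, Finset.mem_Ico]; omega
  have := HLee_geom p hp c
  rw [h, Finset.sum_insert (by simp)] at this
  simp only [Nat.cast_zero, mul_zero, HLee_zero] at this
  rw [← this]; ring

lemma HL_den_iff (k p : ℕ) (hp : 0 < p) (J : Finset (Fin k)) (q : Fin k → ℕ)
    (hq : ∀ i, q i = if i ∈ J then p else 1) (a : Fin k → ℕ) (hout : ∀ i ∉ J, a i = 1) :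
    (∑ i, (a i : ℚ) / (q i : ℚ)).den = 1 ↔ (p : ℤ) ∣ ∑ i ∈ J, (a i : ℤ) := by
  classical
  have hp0 : (p : ℚ) ≠ 0 := Nat.cast_ne_zero.2 hp.ne'
  set N : ℕ := ∑ i ∈ J, a i with hN
  set m : ℕ := Jᶜ.card with hm
  have hsplit : (∑ i, (a i : ℚ) / (q i : ℚ)) = ((N + m * p : ℕ) : ℚ) / p := by
    rw [← Finset.sum_add_sum_compl J]
    have h1 : ∑ i ∈ J, (a i : ℚ) / (q i : ℚ) = (N : ℚ) / p := by
      rw [hN]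
      push_cast
      rw [Finset.sum_div]
      refine Finset.sum_congr rfl fun i hi => by rw [hq i, if_pos hi]
    have h2 : ∑ i ∈ Jᶜ, (a i : ℚ) / (q i : ℚ) = (m : ℚ) := by
      rw [hm, Finset.card_eq_sum_ones, Nat.cast_sum]
      refine Finset.sum_congr rfl fun i hi => ?_
      rw [hq i, if_neg (Finset.mem_compl.1 hi), hout i (Finset.mem_compl.1 hi)]
      norm_num
    rw [h1, h2]
    push_cast
    field_simp
  rw [hsplit, Rat.den_div_natCast_eq_one_iff _ _ hp.ne']
  have : ∑ i ∈ J, (a i : ℤ) = (N : ℤ) := by rw [hN]; push_cast; ring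
  rw [this, Int.natCast_dvd_natCast]
  have hmp : p ∣ m * p := Dvd.intro m (mul_comm p m)
  constructor
  · intro h
    rw [add_comm] at h
    exact (Nat.dvd_add_right hmp).1 h
  · intro h
    rw [add_comm]
    exact (Nat.dvd_add_right hmp).2 h

lemma HL_summand (k p : ℕ) (hp : 0 < p) (d : Fin k → ℤ) (J : Finset (Fin k)) (q : Fin k → ℕ)
    (hq : ∀ i, q i = if i ∈ J then p else 1) (a : Fin k → ℕ) (hout : ∀ i ∉ J, a i = 1) :
    Complex.exp (2 * Real.pi * Complex.I * ∑ i, (d i : ℂ) * (a i : ℂ) / (q i : ℂ)) =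
      ∏ i ∈ J, HLee p (d i * a i) := by
  classical
  have hp0 : (p : ℂ) ≠ 0 := Nat.cast_ne_zero.2 hp.ne'
  have hsplit : (∑ i, (d i : ℂ) * (a i : ℂ) / (q i : ℂ)) =
      ((∑ i ∈ J, d i * (a i : ℤ) : ℤ) : ℂ) / p + ((∑ i ∈ Jᶜ, d i : ℤ) : ℂ) := by
    rw [← Finset.sum_add_sum_compl J]
    congr 1
    · push_cast
      rw [Finset.sum_div]
      refine Finset.sum_congr rfl fun i hi => by rw [hq i, if_pos hi]
    · push_cast
      refine Finset.sum_congr rfl fun i hi => ?_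
      rw [hq i, if_neg (Finset.mem_compl.1 hi), hout i (Finset.mem_compl.1 hi)]
      norm_num
  rw [hsplit, mul_add, Complex.exp_add]
  have h2 : Complex.exp (2 * Real.pi * Complex.I * ((∑ i ∈ Jᶜ, d i : ℤ) : ℂ)) = 1 := by
    rw [mul_comm]
    exact Complex.exp_int_mul_two_pi_mul_I _
  rw [h2, mul_one, ← HLee_sum]
  unfold HLee
  congr 1
  ring

lemma HL_step1 (k p : ℕ) (hp : p.Prime) (d : Fin k → ℤ) (J : Finset (Fin k)) (q : Fin k → ℕ)
    (hq : ∀ i, q i = if i ∈ J then p else 1) :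
    HLA k d q = ∑ a ∈ Fintype.piFinset (fun i => if i ∈ J then Finset.Ico 1 p else {1}),
      (if (p : ℤ) ∣ ∑ i ∈ J, (a i : ℤ) then ∏ i ∈ J, HLee p (d i * a i) else 0) := by
  classical
  have hp1 : 1 < p := hp.one_lt
  have hp0 : 0 < p := hp.pos
  rw [← Finset.sum_filter]
  unfold HLA
  have hset : (Fintype.piFinset fun i => Finset.Icc 1 (q i)).filter
      (fun a => (∀ i, Nat.gcd (a i) (q i) = 1) ∧ (∑ i, (a i : ℚ) / (q i : ℚ)).den = 1) =
      (Fintype.piFinset (fun i => if i ∈ J then Finset.Ico 1 p else {1})).filter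
      (fun a => (p : ℤ) ∣ ∑ i ∈ J, (a i : ℤ)) := by
    ext a
    simp only [Finset.mem_filter, Fintype.mem_piFinset, Finset.mem_Icc, Finset.mem_Ico]
    constructor
    · rintro ⟨hmem, hgcd, hden⟩
      have hout : ∀ i ∉ J, a i = 1 := by
        intro i hi
        have := hmem i
        rw [hq i, if_neg hi] at this
        omega
      refine ⟨fun i => ?_, (HL_den_iff k p hp0 J q hq a hout).1 hden⟩
      by_cases hi : i ∈ J
      · rw [if_pos hi]
        have h1 := hmem i
        rw [hq i, if_pos hi] at h1
        have h2 := hgcd i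
        rw [hq i, if_pos hi] at h2
        simp only [Finset.mem_Ico]
        refine ⟨h1.1, lt_of_le_of_ne h1.2 fun h => ?_⟩
        rw [h, Nat.gcd_self] at h2
        omega
      · rw [if_neg hi]
        simp [hout i hi]
    · rintro ⟨hmem, hdvd⟩
      have hout : ∀ i ∉ J, a i = 1 := by
        intro i hi
        have := hmem i
        rw [if_neg hi] at this
        simpa using this
      have hin : ∀ i ∈ J, 1 ≤ a i ∧ a i < p := by
        intro i hi
        have := hmem i
        rw [if_pos hi] at this
        simpa using this
      refine ⟨fun i => ?_, fun i => ?_, (HL_den_iff k p hp0 J q hq a hout).2 hdvd⟩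
      · by_cases hi : i ∈ J
        · rw [hq i, if_pos hi]
          exact ⟨(hin i hi).1, le_of_lt (hin i hi).2⟩
        · rw [hq i, if_neg hi, hout i hi]
          omega
      · by_cases hi : i ∈ J
        · rw [hq i, if_pos hi]
          have := hin i hi
          have hnd : ¬ p ∣ a i := fun h => by
            have := Nat.le_of_dvd (by omega) h
            omega
          exact Nat.Coprime.gcd_eq_one ((Nat.coprime_comm).1 (hp.coprime_iff_not_dvd.2 hnd))
        · rw [hq i, if_neg hi, hout i hi]
          simp
  rw [hset]
  refine Finset.sum_congr rfl fun a ha => ?_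
  rw [Finset.mem_filter, Fintype.mem_piFinset] at ha
  have hout : ∀ i ∉ J, a i = 1 := fun i hi => by
    have := ha.1 i; rw [if_neg hi] at this; simpa using this
  exact HL_summand k p hp0 d J q hq a hout

lemma HL_step2 (k p : ℕ) (hp : 0 < p) (d : Fin k → ℤ) (J : Finset (Fin k)) :
    ∑ a ∈ Fintype.piFinset (fun i => if i ∈ J then Finset.Ico 1 p else {1}),
      (if (p : ℤ) ∣ ∑ i ∈ J, (a i : ℤ) then ∏ i ∈ J, HLee p (d i * a i) else 0)
    = (p : ℂ)⁻¹ * ∑ t ∈ Finset.range p, ∏ i ∈ J,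
        ((if (p : ℤ) ∣ (d i + (t : ℤ)) then (p : ℂ) else 0) - 1) := by
  classical
  have hp0 : (p : ℂ) ≠ 0 := Nat.cast_ne_zero.2 hp.ne'
  -- rewrite each summand with the orthogonality relation
  have h1 : ∀ a : Fin k → ℕ,
      (if (p : ℤ) ∣ ∑ i ∈ J, (a i : ℤ) then ∏ i ∈ J, HLee p (d i * a i) else 0)
      = (p : ℂ)⁻¹ * ∑ t ∈ Finset.range p,
          ∏ i ∈ J, HLee p ((d i + (t : ℤ)) * a i) := by
    intro a
    have horth := HLee_geom p hp (∑ i ∈ J, (a i : ℤ))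
    have h2 : ∀ t : ℕ, HLee p ((∑ i ∈ J, (a i : ℤ)) * t) * ∏ i ∈ J, HLee p (d i * a i)
        = ∏ i ∈ J, HLee p ((d i + (t : ℤ)) * a i) := by
      intro t
      rw [Finset.sum_mul, HLee_sum, ← Finset.prod_mul_distrib]
      refine Finset.prod_congr rfl fun i _ => ?_
      rw [← HLee_add]
      congr 1
      ring
    calc (if (p : ℤ) ∣ ∑ i ∈ J, (a i : ℤ) then ∏ i ∈ J, HLee p (d i * a i) else 0)
        = (p : ℂ)⁻¹ * ((if (p : ℤ) ∣ ∑ i ∈ J, (a i : ℤ) then (p : ℂ) else 0)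
            * ∏ i ∈ J, HLee p (d i * a i)) := by
          by_cases h : (p : ℤ) ∣ ∑ i ∈ J, (a i : ℤ)
          · rw [if_pos h, if_pos h, ← mul_assoc, inv_mul_cancel₀ hp0, one_mul]
          · rw [if_neg h, if_neg h, zero_mul, mul_zero]
      _ = (p : ℂ)⁻¹ * ∑ t ∈ Finset.range p, ∏ i ∈ J, HLee p ((d i + (t : ℤ)) * a i) := by
          rw [← horth, Finset.sum_mul]
          congr 1
          exact Finset.sum_congr rfl fun t _ => h2 t
  simp_rw [h1]
  rw [← Finset.mul_sum, Finset.sum_comm]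
  congr 1
  refine Finset.sum_congr rfl fun t _ => ?_
  -- now factor the inner sum over the product set
  have hext : ∀ a : Fin k → ℕ, ∏ i ∈ J, HLee p ((d i + (t : ℤ)) * a i)
      = ∏ i, (if i ∈ J then HLee p ((d i + (t : ℤ)) * a i) else 1) := by
    intro a
    calc ∏ i ∈ J, HLee p ((d i + (t : ℤ)) * a i)
        = ∏ i ∈ J, (if i ∈ J then HLee p ((d i + (t : ℤ)) * a i) else 1) :=
          Finset.prod_congr rfl fun i hi => (if_pos hi).symm
      _ = ∏ i, (if i ∈ J then HLee p ((d i + (t : ℤ)) * a i) else 1) :=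
          Finset.prod_subset (Finset.subset_univ J) (fun i _ hi => if_neg hi)
  simp_rw [hext]
  rw [← Finset.prod_univ_sum (fun i => if i ∈ J then Finset.Ico 1 p else {1})
    (fun i x => if i ∈ J then HLee p ((d i + (t : ℤ)) * x) else 1)]
  calc ∏ i, ∑ x ∈ (if i ∈ J then Finset.Ico 1 p else {1}),
        (if i ∈ J then HLee p ((d i + (t : ℤ)) * x) else 1)
      = ∏ i ∈ J, ∑ x ∈ (if i ∈ J then Finset.Ico 1 p else {1}),
        (if i ∈ J then HLee p ((d i + (t : ℤ)) * x) else 1) :=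
        (Finset.prod_subset (Finset.subset_univ J) (fun i _ hi => by simp [hi])).symm
    _ = ∏ i ∈ J, ((if (p : ℤ) ∣ (d i + (t : ℤ)) then (p : ℂ) else 0) - 1) := by
        refine Finset.prod_congr rfl fun i hi => ?_
        simp only [if_pos hi]
        exact HLee_geom' p hp (d i + (t : ℤ))

lemma HL_step3 (k p : ℕ) (hp : p.Prime) (d : Fin k → ℤ)
    (hd : Function.Injective fun i => ((d i : ZMod p))) (J : Finset (Fin k)) :
    ∑ t ∈ Finset.range p, ∏ i ∈ J, ((if (p : ℤ) ∣ (d i + (t : ℤ)) then (p : ℂ) else 0) - 1)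
    = (J.card : ℂ) * ((p : ℂ) - 1) * (-1 : ℂ) ^ (J.card - 1)
      + ((p : ℂ) - (J.card : ℂ)) * (-1 : ℂ) ^ J.card := by
  classical
  haveI : Fact p.Prime := ⟨hp⟩
  set P : ℕ → Prop := fun t => ∃ i ∈ J, (p : ℤ) ∣ d i + (t : ℤ) with hP
  have key : ∀ (i : Fin k) (t : ℕ), ((p : ℤ) ∣ d i + (t : ℤ)) ↔ ((d i : ZMod p) = -(t : ZMod p)) := by
    intro i t
    rw [← ZMod.intCast_zmod_eq_zero_iff_dvd]
    push_cast
    constructor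
    · intro h; linear_combination h
    · intro h; rw [h]; ring
  -- cardinality of the "hit" set
  have hcard : ((Finset.range p).filter P).card = J.card := by
    symm
    apply Finset.card_bij (fun i _ => ((-(d i) : ZMod p)).val)
    · intro i hi
      rw [Finset.mem_filter, Finset.mem_range]
      refine ⟨ZMod.val_lt _, ⟨i, hi, ?_⟩⟩
      rw [key]
      rw [ZMod.natCast_val, ZMod.cast_id]
      ring
    · intro i hi i' hi' h
      apply hd
      have : ((-(d i) : ZMod p)) = ((-(d i') : ZMod p)) := by
        have := congrArg (Nat.cast : ℕ → ZMod p) h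
        rwa [ZMod.natCast_val, ZMod.natCast_val, ZMod.cast_id, ZMod.cast_id] at this
      simpa using (neg_injective this)
    · intro t ht
      rw [Finset.mem_filter, Finset.mem_range] at ht
      obtain ⟨htp, i, hi, hdvd⟩ := ht
      refine ⟨i, hi, ?_⟩
      rw [key] at hdvd
      rw [hdvd, neg_neg, ZMod.val_natCast_of_lt htp]
  -- value on the hit set
  have hval1 : ∀ t ∈ (Finset.range p).filter P,
      ∏ i ∈ J, ((if (p : ℤ) ∣ (d i + (t : ℤ)) then (p : ℂ) else 0) - 1)
        = ((p : ℂ) - 1) * (-1 : ℂ) ^ (J.card - 1) := by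
    intro t ht
    rw [Finset.mem_filter] at ht
    obtain ⟨htr, i₀, hi₀, hdvd₀⟩ := ht
    have huniq : ∀ i ∈ J.erase i₀, ¬ (p : ℤ) ∣ d i + (t : ℤ) := by
      intro i hi hdvd
      obtain ⟨hne, hiJ⟩ := Finset.mem_erase.1 hi
      apply hne
      apply hd
      rw [key] at hdvd hdvd₀
      simp only
      rw [hdvd, hdvd₀]
    rw [← Finset.mul_prod_erase J _ hi₀, if_pos hdvd₀]
    congr 1
    calc ∏ i ∈ J.erase i₀, ((if (p : ℤ) ∣ d i + (t : ℤ) then (p : ℂ) else 0) - 1)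
        = ∏ _i ∈ J.erase i₀, (-1 : ℂ) := by
          refine Finset.prod_congr rfl fun i hi => ?_
          rw [if_neg (huniq i hi)]
          ring
      _ = (-1 : ℂ) ^ (J.card - 1) := by
          rw [Finset.prod_const, Finset.card_erase_of_mem hi₀]
  -- value off the hit set
  have hval2 : ∀ t ∈ (Finset.range p).filter (fun t => ¬ P t),
      ∏ i ∈ J, ((if (p : ℤ) ∣ (d i + (t : ℤ)) then (p : ℂ) else 0) - 1)
        = (-1 : ℂ) ^ J.card := by
    intro t ht
    rw [Finset.mem_filter] at ht
    calc ∏ i ∈ J, ((if (p : ℤ) ∣ d i + (t : ℤ) then (p : ℂ) else 0) - 1)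
        = ∏ _i ∈ J, (-1 : ℂ) := by
          refine Finset.prod_congr rfl fun i hi => ?_
          rw [if_neg (fun h => ht.2 ⟨i, hi, h⟩)]
          ring
      _ = (-1 : ℂ) ^ J.card := Finset.prod_const _
  have hsplit := Finset.sum_filter_add_sum_filter_not (Finset.range p) P
    (fun t => ∏ i ∈ J, ((if (p : ℤ) ∣ (d i + (t : ℤ)) then (p : ℂ) else 0) - 1))
  rw [← hsplit, Finset.sum_congr rfl hval1, Finset.sum_congr rfl hval2,
    Finset.sum_const, Finset.sum_const, hcard]
  have hcard2 : ((Finset.range p).filter (fun t => ¬ P t)).card = p - J.card := by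
    have := Finset.card_filter_add_card_filter_not (s := Finset.range p) (p := P)
    rw [hcard, Finset.card_range] at this
    omega
  have hle : J.card ≤ p := by
    rw [← hcard]
    exact le_trans (Finset.card_filter_le _ _) (by rw [Finset.card_range])
  rw [hcard2, nsmul_eq_mul, nsmul_eq_mul, Nat.cast_sub hle]
  ring

/-- Evaluation of `A(q₁,…,q_k)` when the moduli are `p` on a set `J` and `1`
elsewhere, and the `dᵢ` are distinct mod `p`: it equals `(-1)^{j-1}(j-1)`. -/
theorem stmt_5 (k : ℕ) (p : ℕ) (hp : p.Prime) (d : Fin k → ℤ)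
    (hd : Function.Injective fun i => ((d i : ZMod p)))
    (J : Finset (Fin k)) (hJ : 1 ≤ J.card)
    (q : Fin k → ℕ) (hq : ∀ i, q i = if i ∈ J then p else 1) :
    HLA k d q = (-1 : ℂ) ^ (J.card - 1) * ((J.card : ℂ) - 1) := by
  rw [HL_step1 k p hp d J q hq, HL_step2 k p hp.pos d J, HL_step3 k p hp d hd J]
  obtain ⟨n, hn⟩ : ∃ n, J.card = n + 1 := ⟨J.card - 1, by omega⟩
  have hp0 : (p : ℂ) ≠ 0 := Nat.cast_ne_zero.2 hp.pos.ne'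
  rw [hn]
  simp only [Nat.add_sub_cancel]
  push_cast
  field_simp
  ring
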